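/- For every n ≥ 1, the polynomial Ã_n(x,y,t|α) := Σ_{σ ∈ S_n} x^{exc σ} y^{drop σ} ((x+y)t)^{fix σ} α^{cyc σ} admits the gamma-expansion Ã_n(x,y,t|α) = Σ_{j=0}^{⌊n/2⌋} γ̃_{n,j}(α,t) (xy)^j (x+y)^{n−2j}, where γ̃_{n,j}(α,t) = Σ over σ ∈ S_n with cda(σ) = 0 and exc(σ) = j of α^{cyc(σ)} t^{fix(σ)}. -/

import Mathlib

open Finset

def permExc {n : ℕ} (σ : Equiv.Perm (Fin n)) : ℕ :=
  (Finset.univ.filter fun i : Fin n => i < σ i).card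

def permDrop {n : ℕ} (σ : Equiv.Perm (Fin n)) : ℕ :=
  (Finset.univ.filter fun i : Fin n => σ i < i).card

def permFix {n : ℕ} (σ : Equiv.Perm (Fin n)) : ℕ :=
  (Finset.univ.filter fun i : Fin n => σ i = i).card

/-- number of cycles (including fixed points) -/
def permCyc {n : ℕ} (σ : Equiv.Perm (Fin n)) : ℕ :=
  σ.cycleType.card + permFix σ

/-- number of cycle double ascents: σ⁻¹(i) < i < σ(i) -/
def permCda {n : ℕ} (σ : Equiv.Perm (Fin n)) : ℕ :=
  (Finset.univ.filter fun i : Fin n => σ⁻¹ i < i ∧ i < σ i).card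

theorem Equiv.Perm.apply_inv_self {α : Type*} (f : Equiv.Perm α) (x : α) : f (f⁻¹ x) = x :=
  Equiv.apply_symm_apply f x

theorem Equiv.Perm.inv_apply_self {α : Type*} (f : Equiv.Perm α) (x : α) : f⁻¹ (f x) = x :=
  Equiv.symm_apply_apply f x

namespace GammaAux

open Equiv Equiv.Perm

variable {n : ℕ}

/-- set of cycle double ascents -/
def cdaSet (σ : Perm (Fin n)) : Finset (Fin n) :=
  Finset.univ.filter fun i => σ⁻¹ i < i ∧ i < σ i

/-- set of cycle double descents -/
def cddSet (σ : Perm (Fin n)) : Finset (Fin n) :=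
  Finset.univ.filter fun i => σ i < i ∧ i < σ⁻¹ i

lemma mem_cdaSet {σ : Perm (Fin n)} {i : Fin n} :
    i ∈ cdaSet σ ↔ σ⁻¹ i < i ∧ i < σ i := by simp [cdaSet]

lemma mem_cddSet {σ : Perm (Fin n)} {i : Fin n} :
    i ∈ cddSet σ ↔ σ i < i ∧ i < σ⁻¹ i := by simp [cddSet]

/-- delete `x` from its cycle -/
def del (σ : Perm (Fin n)) (x : Fin n) : Perm (Fin n) :=
  Equiv.swap x (σ x) * σ

lemma del_apply_self (σ : Perm (Fin n)) (x : Fin n) : del σ x x = x := by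
  simp [del, Equiv.swap_apply_right]

lemma del_apply_pre (σ : Perm (Fin n)) (x : Fin n) : del σ x (σ⁻¹ x) = σ x := by
  simp [del, Equiv.swap_apply_left]

lemma del_apply (σ : Perm (Fin n)) (x y : Fin n) (h1 : y ≠ x) (h2 : y ≠ σ⁻¹ x) :
    del σ x y = σ y := by
  have hx : σ y ≠ x := fun h => h2 (by simp [← h])
  have hsx : σ y ≠ σ x := fun h => h1 (σ.injective h)
  simp [del, Equiv.swap_apply_of_ne_of_ne hx hsx]

lemma del_pow_fixed (σ : Perm (Fin n)) (x : Fin n) (k : ℕ) : ((del σ x) ^ k) x = x := by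
  induction k with
  | zero => rfl
  | succ k ih => rw [pow_succ, Perm.mul_apply, del_apply_self, ih]

lemma exists_scan_lt {σ : Perm (Fin n)} {x : Fin n} (h1 : σ⁻¹ x < x) :
    ∃ k, ((del σ x) ^ k) (σ x) < x := by
  refine ⟨orderOf (del σ x) - 1, ?_⟩
  have hm : 0 < orderOf (del σ x) := orderOf_pos _
  have h : ((del σ x) ^ (orderOf (del σ x) - 1)) (del σ x (σ⁻¹ x)) = σ⁻¹ x := by
    rw [← Perm.mul_apply, ← pow_succ, Nat.sub_add_cancel hm, pow_orderOf_eq_one]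
    rfl
  rw [del_apply_pre] at h
  rw [h]; exact h1

end GammaAux

namespace GammaAux
open Equiv Equiv.Perm

variable {n : ℕ}

/-- index of first "fit" when scanning forward -/
def scanK (σ : Perm (Fin n)) (x : Fin n) (h1 : σ⁻¹ x < x) : ℕ :=
  Nat.find (exists_scan_lt h1)

/-- the element just below the landing spot -/
def hopc (σ : Perm (Fin n)) (x : Fin n) (h1 : σ⁻¹ x < x) : Fin n :=
  ((del σ x) ^ scanK σ x h1) (σ x)

/-- the element just above the landing spot -/
def hopb (σ : Perm (Fin n)) (x : Fin n) (h1 : σ⁻¹ x < x) : Fin n :=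
  ((del σ x) ^ (scanK σ x h1 - 1)) (σ x)

/-- hop a cycle double ascent down -/
def hopDown (σ : Perm (Fin n)) (x : Fin n) : Perm (Fin n) :=
  if h : σ⁻¹ x < x ∧ x < σ x then Equiv.swap x (hopc σ x h.1) * del σ x else σ

section facts
variable {σ : Perm (Fin n)} {x : Fin n} (h1 : σ⁻¹ x < x) (h2 : x < σ x)
include h1 h2
set_option linter.unusedSectionVars false

lemma hopc_lt : hopc σ x h1 < x := Nat.find_spec (exists_scan_lt h1)

lemma scanK_pos : 0 < scanK σ x h1 := by
  rcases Nat.eq_zero_or_pos (scanK σ x h1) with h | h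
  · exfalso
    have := Nat.find_spec (exists_scan_lt h1)
    rw [show Nat.find (exists_scan_lt h1) = scanK σ x h1 from rfl, h, pow_zero] at this
    exact absurd h2 (not_lt.2 (le_of_lt this))
  · exact h

lemma scan_ne (k : ℕ) : ((del σ x) ^ k) (σ x) ≠ x := by
  intro h
  have h' : ((del σ x) ^ k) (σ x) = ((del σ x) ^ k) x := by rw [h, del_pow_fixed]
  have := ((del σ x) ^ k).injective h'
  exact absurd this (ne_of_gt h2)

lemma hopb_gt : x < hopb σ x h1 := by
  have hne : hopb σ x h1 ≠ x := scan_ne h1 h2 _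
  have hnlt : ¬ ((del σ x) ^ (scanK σ x h1 - 1)) (σ x) < x :=
    Nat.find_min (exists_scan_lt h1) (Nat.sub_lt (scanK_pos h1 h2) one_pos)
  exact lt_of_le_of_ne (not_lt.1 hnlt) (Ne.symm hne)

lemma del_hopb : del σ x (hopb σ x h1) = hopc σ x h1 := by
  have : scanK σ x h1 = (scanK σ x h1 - 1) + 1 := (Nat.sub_add_cancel (scanK_pos h1 h2)).symm
  rw [hopc, this, pow_succ', Perm.mul_apply]; rfl

lemma hopb_ne_pre : hopb σ x h1 ≠ σ⁻¹ x :=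
  ne_of_gt (lt_trans h1 (hopb_gt h1 h2))

lemma sigma_hopb : σ (hopb σ x h1) = hopc σ x h1 := by
  rw [← del_apply σ x _ (ne_of_gt (hopb_gt h1 h2)) (hopb_ne_pre h1 h2)]
  exact del_hopb h1 h2

lemma hopDown_spec : hopDown σ x = Equiv.swap x (hopc σ x h1) * del σ x :=
  dif_pos ⟨h1, h2⟩

lemma hop_apply_pre : hopDown σ x (σ⁻¹ x) = σ x := by
  rw [hopDown_spec h1 h2, Perm.mul_apply, del_apply_pre,
    Equiv.swap_apply_of_ne_of_ne (ne_of_gt h2) (ne_of_gt (lt_trans (hopc_lt h1 h2) h2))]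

lemma hop_apply_b : hopDown σ x (hopb σ x h1) = x := by
  rw [hopDown_spec h1 h2, Perm.mul_apply, del_hopb h1 h2, Equiv.swap_apply_right]

lemma hop_apply_x : hopDown σ x x = hopc σ x h1 := by
  rw [hopDown_spec h1 h2, Perm.mul_apply, del_apply_self, Equiv.swap_apply_left]

lemma hop_apply_other (y : Fin n) (hy1 : y ≠ x) (hy2 : y ≠ σ⁻¹ x) (hy3 : y ≠ hopb σ x h1) :
    hopDown σ x y = σ y := by
  rw [hopDown_spec h1 h2, Perm.mul_apply, del_apply σ x y hy1 hy2]
  have hx : σ y ≠ x := fun h => hy2 (by simp [← h])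
  have hc : σ y ≠ hopc σ x h1 := fun h => hy3 (σ.injective (by rw [h, sigma_hopb h1 h2]))
  exact Equiv.swap_apply_of_ne_of_ne hx hc

lemma hop_inv_sx : (hopDown σ x)⁻¹ (σ x) = σ⁻¹ x := by
  rw [Perm.inv_eq_iff_eq]; exact (hop_apply_pre h1 h2).symm

lemma hop_inv_x : (hopDown σ x)⁻¹ x = hopb σ x h1 := by
  rw [Perm.inv_eq_iff_eq]; exact (hop_apply_b h1 h2).symm

lemma hop_inv_c : (hopDown σ x)⁻¹ (hopc σ x h1) = x := by
  rw [Perm.inv_eq_iff_eq]; exact (hop_apply_x h1 h2).symm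

lemma hop_inv_other (y : Fin n) (hy1 : y ≠ σ x) (hy2 : y ≠ x) (hy3 : y ≠ hopc σ x h1) :
    (hopDown σ x)⁻¹ y = σ⁻¹ y := by
  rw [Perm.inv_eq_iff_eq, hop_apply_other h1 h2 (σ⁻¹ y) ?_ ?_ ?_]
  · simp
  · intro h; exact hy1 (by simpa using congrArg σ h)
  · intro h; exact hy2 (by simpa using congrArg σ h)
  · intro h; exact hy3 (by rw [← sigma_hopb h1 h2, ← h]; simp)

end facts
end GammaAux

namespace GammaAux
open Equiv Equiv.Perm

variable {n : ℕ}

section facts2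
variable {σ : Perm (Fin n)} {x : Fin n} (h1 : σ⁻¹ x < x) (h2 : x < σ x)
include h1 h2
set_option linter.unusedSectionVars false

lemma hop_cmp (y : Fin n) (hy : y ≠ x) :
    (hopDown σ x y < y ↔ σ y < y) ∧ (hopDown σ x y = y ↔ σ y = y) ∧
      (y < hopDown σ x y ↔ y < σ y) := by
  rcases eq_or_ne y (σ⁻¹ x) with rfl | hp
  · rw [hop_apply_pre h1 h2, Perm.apply_inv_self]
    have ha : σ⁻¹ x < x := h1
    have hb : σ⁻¹ x < σ x := lt_trans h1 h2
    exact ⟨iff_of_false (not_lt.2 hb.le) (not_lt.2 ha.le),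
      iff_of_false (ne_of_gt hb) (ne_of_gt ha),
      iff_of_true hb ha⟩
  rcases eq_or_ne y (hopb σ x h1) with rfl | hb
  · rw [hop_apply_b h1 h2, sigma_hopb h1 h2]
    have ha : x < hopb σ x h1 := hopb_gt h1 h2
    have hc : hopc σ x h1 < hopb σ x h1 := lt_trans (hopc_lt h1 h2) ha
    exact ⟨iff_of_true ha hc, iff_of_false (ne_of_lt ha) (ne_of_lt hc),
      iff_of_false (not_lt.2 ha.le) (not_lt.2 hc.le)⟩
  · rw [hop_apply_other h1 h2 y hy hp hb]
    exact ⟨Iff.rfl, Iff.rfl, Iff.rfl⟩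

lemma hop_cmp_inv (y : Fin n) (hy : y ≠ x) :
    ((hopDown σ x)⁻¹ y < y ↔ σ⁻¹ y < y) ∧ ((hopDown σ x)⁻¹ y = y ↔ σ⁻¹ y = y) ∧
      (y < (hopDown σ x)⁻¹ y ↔ y < σ⁻¹ y) := by
  rcases eq_or_ne y (σ x) with rfl | hp
  · rw [hop_inv_sx h1 h2, Perm.inv_apply_self]
    have ha : x < σ x := h2
    have hb : σ⁻¹ x < σ x := lt_trans h1 h2
    exact ⟨iff_of_true hb ha, iff_of_false (ne_of_lt hb) (ne_of_lt ha),
      iff_of_false (not_lt.2 hb.le) (not_lt.2 ha.le)⟩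
  rcases eq_or_ne y (hopc σ x h1) with rfl | hc
  · rw [hop_inv_c h1 h2]
    have hbinv : σ⁻¹ (hopc σ x h1) = hopb σ x h1 := by
      rw [← sigma_hopb h1 h2, Perm.inv_apply_self]
    rw [hbinv]
    have ha : hopc σ x h1 < x := hopc_lt h1 h2
    have hb : hopc σ x h1 < hopb σ x h1 := lt_trans ha (hopb_gt h1 h2)
    exact ⟨iff_of_false (not_lt.2 ha.le) (not_lt.2 hb.le),
      iff_of_false (ne_of_gt ha) (ne_of_gt hb), iff_of_true ha hb⟩
  · rw [hop_inv_other h1 h2 y hp hy hc]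
    exact ⟨Iff.rfl, Iff.rfl, Iff.rfl⟩

lemma permExc_hop : permExc σ = permExc (hopDown σ x) + 1 := by
  have hfil : (Finset.univ.filter fun i : Fin n => i < hopDown σ x i) =
      (Finset.univ.filter fun i : Fin n => i < σ i).erase x := by
    ext y
    simp only [Finset.mem_erase, Finset.mem_filter, Finset.mem_univ, true_and]
    rcases eq_or_ne y x with rfl | hy
    · simp only [ne_eq, not_true_eq_false, false_and, iff_false, not_lt]
      rw [hop_apply_x h1 h2]
      exact (hopc_lt h1 h2).le
    · rw [(hop_cmp h1 h2 y hy).2.2]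
      simp [hy]
  have hx : x ∈ Finset.univ.filter fun i : Fin n => i < σ i := by
    simp [h2]
  rw [permExc, permExc, hfil, ← Finset.card_erase_add_one hx]

lemma permDrop_hop : permDrop (hopDown σ x) = permDrop σ + 1 := by
  have hfil : (Finset.univ.filter fun i : Fin n => hopDown σ x i < i) =
      insert x (Finset.univ.filter fun i : Fin n => σ i < i) := by
    ext y
    simp only [Finset.mem_insert, Finset.mem_filter, Finset.mem_univ, true_and]
    rcases eq_or_ne y x with rfl | hy
    · simp only [true_or, iff_true]
      rw [hop_apply_x h1 h2]
      exact hopc_lt h1 h2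
    · rw [(hop_cmp h1 h2 y hy).1]
      simp [hy]
  rw [permDrop, permDrop, hfil, Finset.card_insert_of_notMem (by simp [not_lt, h2.le])]

lemma permFix_hop : permFix (hopDown σ x) = permFix σ := by
  unfold permFix
  congr 1
  ext y
  simp only [Finset.mem_filter, Finset.mem_univ, true_and]
  rcases eq_or_ne y x with rfl | hy
  · rw [hop_apply_x h1 h2]
    exact iff_of_false (ne_of_lt (hopc_lt h1 h2)) (ne_of_gt h2)
  · exact (hop_cmp h1 h2 y hy).2.1

lemma cdaSet_hop : cdaSet (hopDown σ x) = (cdaSet σ).erase x := by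
  ext y
  rw [Finset.mem_erase, mem_cdaSet, mem_cdaSet]
  rcases eq_or_ne y x with rfl | hy
  · simp only [ne_eq, not_true_eq_false, false_and, iff_false, not_and]
    intro _
    rw [hop_apply_x h1 h2]
    exact not_lt.2 (hopc_lt h1 h2).le
  · rw [(hop_cmp h1 h2 y hy).2.2, (hop_cmp_inv h1 h2 y hy).1]
    simp [hy]

lemma cddSet_hop : cddSet (hopDown σ x) = insert x (cddSet σ) := by
  ext y
  rw [Finset.mem_insert, mem_cddSet, mem_cddSet]
  rcases eq_or_ne y x with rfl | hy
  · simp only [true_or, iff_true]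
    rw [hop_apply_x h1 h2, hop_inv_x h1 h2]
    exact ⟨hopc_lt h1 h2, hopb_gt h1 h2⟩
  · rw [(hop_cmp h1 h2 y hy).1, (hop_cmp_inv h1 h2 y hy).2.2]
    simp [hy]

end facts2
end GammaAux

namespace GammaAux
open Equiv Equiv.Perm

variable {n : ℕ}

section cyc
variable {σ : Perm (Fin n)} {x : Fin n} (hx : σ x ≠ x) (hxx : σ (σ x) ≠ x)
include hx hxx
set_option linter.unusedSectionVars false

private lemma sp_x : (Equiv.swap x (σ x) * σ) x = x := by
  simp [Perm.mul_apply, Equiv.swap_apply_right]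

lemma factor_not_mem (f : Perm (Fin n)) (hf : f ∈ σ.cycleFactorsFinset)
    (hxf : x ∉ f.support) : f ∈ (Equiv.swap x (σ x) * σ).cycleFactorsFinset := by
  rw [mem_cycleFactorsFinset_iff] at hf ⊢
  refine ⟨hf.1, fun a ha => ?_⟩
  have hfa : f a = σ a := hf.2 a ha
  have h1 : σ a ≠ x := by
    intro h
    exact hxf (by rw [← hfa] at h; exact (by rw [← h]; exact apply_mem_support.2 ha))
  have h2 : σ a ≠ σ x := by
    intro h
    have : a = x := σ.injective h
    exact hxf (this ▸ ha)
  rw [hfa, Perm.mul_apply, Equiv.swap_apply_of_ne_of_ne h1 h2]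

lemma factor_mem (f : Perm (Fin n)) (hf : f ∈ σ.cycleFactorsFinset)
    (hxf : x ∈ f.support) :
    Equiv.swap x (σ x) * f ∈ (Equiv.swap x (σ x) * σ).cycleFactorsFinset := by
  have hmem := mem_cycleFactorsFinset_iff.1 hf
  have hfx : f x = σ x := hmem.2 x hxf
  have hsxf : σ x ∈ f.support := by rw [← hfx]; exact apply_mem_support.2 hxf
  have hcyc : IsCycle (Equiv.swap x (σ x) * f) := by
    rw [← hfx]
    exact hmem.1.swap_mul (by rwa [hfx]) (by rw [hfx, hmem.2 (σ x) hsxf]; exact hxx)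
  rw [mem_cycleFactorsFinset_iff]
  refine ⟨hcyc, fun a ha => ?_⟩
  have hax : a ≠ x := by
    intro h; subst h
    rw [mem_support, Perm.mul_apply, hfx, Equiv.swap_apply_right] at ha
    exact ha rfl
  by_cases haf : a ∈ f.support
  · rw [Perm.mul_apply, Perm.mul_apply, hmem.2 a haf]
  · exfalso
    have hfa : f a = a := notMem_support.1 haf
    rw [mem_support, Perm.mul_apply, hfa] at ha
    rcases eq_or_ne a (σ x) with rfl | h
    · exact haf hsxf
    · exact ha (Equiv.swap_apply_of_ne_of_ne hax h)

lemma inj_aux (f1 f2 : Perm (Fin n)) (hf1 : f1 ∈ σ.cycleFactorsFinset)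
    (hf2 : f2 ∈ σ.cycleFactorsFinset) (hm1 : x ∈ f1.support) (hm2 : x ∉ f2.support)
    (heq : Equiv.swap x (σ x) * f1 = f2) : False := by
  have hmem := mem_cycleFactorsFinset_iff.1 hf1
  have hfx : f1 x = σ x := hmem.2 x hm1
  have hsxf : σ x ∈ f1.support := by rw [← hfx]; exact apply_mem_support.2 hm1
  have h1 : f1 (σ x) = σ (σ x) := hmem.2 (σ x) hsxf
  have h2 : f2 (σ x) = σ (σ x) := by
    rw [← heq, Perm.mul_apply, h1,
      Equiv.swap_apply_of_ne_of_ne hxx (fun h => hx (σ.injective h))]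
  have hsxf2 : σ x ∈ f2.support := by
    rw [mem_support, h2]
    exact fun h => hx (σ.injective h)
  have : f2 = σ.cycleOf (σ x) := cycle_is_cycleOf hsxf2 hf2
  rw [cycleOf_self_apply] at this
  subst this
  exact hm2 (mem_support_cycleOf_iff.2 ⟨SameCycle.refl _ _, mem_support.2 hx⟩)

lemma card_factors_del :
    (Equiv.swap x (σ x) * σ).cycleFactorsFinset.card = σ.cycleFactorsFinset.card := by
  classical
  refine (Finset.card_bij
    (fun f _ => if x ∈ f.support then Equiv.swap x (σ x) * f else f) ?_ ?_ ?_).symm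
  · intro f hf
    by_cases hxf : x ∈ f.support
    · rw [if_pos hxf]; exact factor_mem hx hxx f hf hxf
    · rw [if_neg hxf]; exact factor_not_mem hx hxx f hf hxf
  · intro f1 hf1 f2 hf2 heq
    by_cases h1 : x ∈ f1.support <;> by_cases h2 : x ∈ f2.support
    · rw [cycle_is_cycleOf h1 hf1, cycle_is_cycleOf h2 hf2]
    · rw [if_pos h1, if_neg h2] at heq
      exact absurd heq (fun h => inj_aux hx hxx f1 f2 hf1 hf2 h1 h2 h)
    · rw [if_neg h1, if_pos h2] at heq
      exact absurd heq.symm (fun h => inj_aux hx hxx f2 f1 hf2 hf1 h2 h1 h)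
    · rwa [if_neg h1, if_neg h2] at heq
  · intro g hg
    have hgmem := mem_cycleFactorsFinset_iff.1 hg
    obtain ⟨a, ha, -⟩ := hgmem.1
    have hag : a ∈ g.support := mem_support.2 ha
    have hax : a ≠ x := by
      intro h; subst h
      exact ha (by rw [hgmem.2 _ hag] at ha ⊢; exact sp_x hx hxx)
    have hga : g a = Equiv.swap x (σ x) (σ a) := hgmem.2 a hag
    have hsa : σ a ≠ a := by
      intro h
      apply ha
      rw [hga, h]
      rcases eq_or_ne a (σ x) with rfl | h'
      · exact absurd (σ.injective h) hx
      · exact Equiv.swap_apply_of_ne_of_ne hax h'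
    have hgc : g = (Equiv.swap x (σ x) * σ).cycleOf a := cycle_is_cycleOf hag hg
    by_cases hsc : σ.SameCycle x a
    · refine ⟨σ.cycleOf x, cycleOf_mem_cycleFactorsFinset_iff.2 (mem_support.2 hx), ?_⟩
      have hxm : x ∈ (σ.cycleOf x).support :=
        mem_support_cycleOf_iff.2 ⟨SameCycle.refl _ _, mem_support.2 hx⟩
      rw [if_pos hxm]
      have hmem' := factor_mem hx hxx _ (cycleOf_mem_cycleFactorsFinset_iff.2
        (mem_support.2 hx)) hxm
      have ham : a ∈ (Equiv.swap x (σ x) * σ.cycleOf x).support := by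
        rw [mem_support, Perm.mul_apply, hsc.cycleOf_apply]
        intro h
        apply ha
        rw [hga]
        exact h
      rw [cycle_is_cycleOf ham hmem', ← hgc]
    · refine ⟨σ.cycleOf a, cycleOf_mem_cycleFactorsFinset_iff.2 (mem_support.2 hsa), ?_⟩
      have hxm : x ∉ (σ.cycleOf a).support := by
        rw [mem_support_cycleOf_iff]
        rintro ⟨h, -⟩
        exact hsc h.symm
      rw [if_neg hxm]
      have hmem' := factor_not_mem hx hxx _ (cycleOf_mem_cycleFactorsFinset_iff.2
        (mem_support.2 hsa)) hxm
      have ham : a ∈ (σ.cycleOf a).support :=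
        mem_support_cycleOf_iff.2 ⟨SameCycle.refl _ _, mem_support.2 hsa⟩
      rw [cycle_is_cycleOf ham hmem', ← hgc]

end cyc
end GammaAux

namespace GammaAux
open Equiv Equiv.Perm

variable {n : ℕ}

lemma cycleType_card_eq (f : Perm (Fin n)) : f.cycleType.card = f.cycleFactorsFinset.card := by
  rw [cycleType_def, Multiset.card_map]
  rfl

section facts3
variable {σ : Perm (Fin n)} {x : Fin n} (h1 : σ⁻¹ x < x) (h2 : x < σ x)
include h1 h2
set_option linter.unusedSectionVars false

lemma sigma_ssx_ne : σ (σ x) ≠ x := by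
  intro h
  have hinv : σ⁻¹ x = σ x := by
    conv_lhs => rw [← h]
    rw [Perm.inv_apply_self]
  rw [hinv] at h1
  exact absurd h2 (not_lt.2 h1.le)

lemma permCyc_hop : permCyc (hopDown σ x) = permCyc σ := by
  have hx : σ x ≠ x := ne_of_gt h2
  have hd1 : (del σ x).cycleFactorsFinset.card = σ.cycleFactorsFinset.card :=
    card_factors_del hx (sigma_ssx_ne h1 h2)
  have htx : hopDown σ x x = hopc σ x h1 := hop_apply_x h1 h2
  have htx' : hopDown σ x x ≠ x := by rw [htx]; exact ne_of_lt (hopc_lt h1 h2)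
  have htxx : hopDown σ x (hopDown σ x x) ≠ x := by
    rw [htx]
    rcases eq_or_ne (hopc σ x h1) (σ⁻¹ x) with h | h
    · rw [h, hop_apply_pre h1 h2]; exact hx
    · rw [hop_apply_other h1 h2 _ (ne_of_lt (hopc_lt h1 h2)) h
        (ne_of_lt (lt_trans (hopc_lt h1 h2) (hopb_gt h1 h2)))]
      intro hh
      exact h (σ.injective (by rw [hh, Perm.apply_inv_self]))
  have hkey : Equiv.swap x (hopDown σ x x) * hopDown σ x = del σ x := by
    rw [htx, hopDown_spec h1 h2, ← mul_assoc, Equiv.swap_mul_self, one_mul]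
  have hd2 : (del σ x).cycleFactorsFinset.card = (hopDown σ x).cycleFactorsFinset.card := by
    rw [← hkey]
    exact card_factors_del htx' htxx
  unfold permCyc
  rw [permFix_hop h1 h2, cycleType_card_eq, cycleType_card_eq, ← hd2, hd1]

lemma del_hop_inv : del (hopDown σ x)⁻¹ x = (del σ x)⁻¹ := by
  have hb : (hopDown σ x)⁻¹ x = hopb σ x h1 := hop_inv_x h1 h2
  have hcomm : del σ x * Equiv.swap x (hopb σ x h1) = Equiv.swap x (hopc σ x h1) * del σ x := by
    apply Equiv.ext
    intro y
    rcases eq_or_ne y x with rfl | hyx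
    · simp only [Perm.mul_apply, Equiv.swap_apply_left, del_apply_self]
      rw [del_hopb h1 h2]
    rcases eq_or_ne y (hopb σ x h1) with rfl | hyb
    · simp only [Perm.mul_apply, Equiv.swap_apply_right, del_apply_self]
      rw [del_hopb h1 h2, Equiv.swap_apply_right]
    · simp only [Perm.mul_apply, Equiv.swap_apply_of_ne_of_ne hyx hyb]
      have h1' : del σ x y ≠ x := by
        intro h
        exact hyx (by simpa using (del σ x).injective (h.trans (del_apply_self σ x).symm))
      have h2' : del σ x y ≠ hopc σ x h1 := by
        intro h
        exact hyb ((del σ x).injective (h.trans (del_hopb h1 h2).symm))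
      rw [Equiv.swap_apply_of_ne_of_ne h1' h2']
  rw [del, hb, hopDown_spec h1 h2]
  rw [mul_inv_rev, ← mul_assoc]
  rw [show Equiv.swap x (hopb σ x h1) * (del σ x)⁻¹ = (del σ x * Equiv.swap x (hopb σ x h1))⁻¹
      by rw [mul_inv_rev]; simp]
  rw [hcomm, mul_inv_rev, mul_assoc]
  simp

lemma hop_cond_inv : ((hopDown σ x)⁻¹)⁻¹ x < x ∧ x < (hopDown σ x)⁻¹ x := by
  constructor
  · rw [inv_inv, hop_apply_x h1 h2]; exact hopc_lt h1 h2
  · rw [hop_inv_x h1 h2]; exact hopb_gt h1 h2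

lemma scan_inv_eq (j : ℕ) (hj : j ≤ scanK σ x h1 - 1) :
    (((del σ x)⁻¹) ^ j) (hopb σ x h1) = ((del σ x) ^ (scanK σ x h1 - 1 - j)) (σ x) := by
  have harith : (del σ x) ^ (scanK σ x h1 - 1) =
      (del σ x) ^ j * (del σ x) ^ (scanK σ x h1 - 1 - j) := by
    rw [← pow_add, Nat.add_sub_cancel' hj]
  rw [hopb, harith, inv_pow]
  simp [Perm.mul_apply]

lemma scanK_inv :
    scanK (hopDown σ x)⁻¹ x (hop_cond_inv h1 h2).1 = scanK σ x h1 ∧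
      hopc (hopDown σ x)⁻¹ x (hop_cond_inv h1 h2).1 = σ⁻¹ x := by
  have hKpos := scanK_pos h1 h2
  have hbase : ∀ j : ℕ, ((del (hopDown σ x)⁻¹ x) ^ j) ((hopDown σ x)⁻¹ x) =
      (((del σ x)⁻¹) ^ j) (hopb σ x h1) := by
    intro j
    rw [del_hop_inv h1 h2, hop_inv_x h1 h2]
  have hlast : (((del σ x)⁻¹) ^ (scanK σ x h1 - 1)) (hopb σ x h1) = σ x := by
    rw [scan_inv_eq h1 h2 _ le_rfl, Nat.sub_self, pow_zero]
    rfl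
  have hK : (((del σ x)⁻¹) ^ (scanK σ x h1)) (hopb σ x h1) = σ⁻¹ x := by
    have : scanK σ x h1 = (scanK σ x h1 - 1) + 1 := (Nat.sub_add_cancel hKpos).symm
    rw [this, pow_succ', Perm.mul_apply, hlast, Perm.inv_eq_iff_eq]
    exact (del_apply_pre σ x).symm
  have hfind : scanK (hopDown σ x)⁻¹ x (hop_cond_inv h1 h2).1 = scanK σ x h1 := by
    refine (Nat.find_eq_iff (exists_scan_lt (hop_cond_inv h1 h2).1)).mpr ⟨?_, ?_⟩
    · rw [hbase, hK]; exact h1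
    · intro j hj
      rw [hbase, scan_inv_eq h1 h2 j (by omega)]
      have hlt : scanK σ x h1 - 1 - j < scanK σ x h1 := by omega
      exact Nat.find_min (exists_scan_lt h1) hlt
  refine ⟨hfind, ?_⟩
  rw [hopc, hfind, hbase, hK]

lemma hop_invol : hopDown ((hopDown σ x)⁻¹) x = σ⁻¹ := by
  have hc := hop_cond_inv h1 h2
  rw [show hopDown ((hopDown σ x)⁻¹) x =
      Equiv.swap x (hopc (hopDown σ x)⁻¹ x hc.1) * del (hopDown σ x)⁻¹ x from dif_pos hc]
  rw [(scanK_inv h1 h2).2, del_hop_inv h1 h2]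
  apply Equiv.ext
  intro y
  rcases eq_or_ne y x with h | hyx
  · rw [h, Perm.mul_apply, show (del σ x)⁻¹ x = x from Perm.inv_eq_iff_eq.2
      (del_apply_self σ x).symm, Equiv.swap_apply_left]
  rcases eq_or_ne y (σ x) with h | hysx
  · rw [h, Perm.mul_apply, show (del σ x)⁻¹ (σ x) = σ⁻¹ x from
      Perm.inv_eq_iff_eq.2 (del_apply_pre σ x).symm, Equiv.swap_apply_right]
    simp
  · have hdy : (del σ x)⁻¹ y = σ⁻¹ y := by
      rw [Perm.inv_eq_iff_eq, del_apply σ x _ _ _]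
      · simp
      · intro h; exact hysx (by simpa using congrArg σ h)
      · intro h; exact hyx (by simpa using congrArg σ h)
    rw [Perm.mul_apply, hdy, Equiv.swap_apply_of_ne_of_ne]
    · intro h; exact hysx (by simpa using congrArg σ h)
    · intro h; exact hyx (by simpa using congrArg σ h)

end facts3
end GammaAux

namespace GammaAux
open Equiv Equiv.Perm

variable {n : ℕ}

lemma permExc_inv (σ : Perm (Fin n)) : permExc σ⁻¹ = permDrop σ := by
  unfold permExc permDrop
  refine Finset.card_bij (fun a _ => σ⁻¹ a) ?_ ?_ ?_
  · intro a ha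
    simp only [Finset.mem_filter, Finset.mem_univ, true_and] at ha ⊢
    rwa [Perm.apply_inv_self]
  · intro a _ b _ h
    exact σ⁻¹.injective h
  · intro b hb
    simp only [Finset.mem_filter, Finset.mem_univ, true_and] at hb ⊢
    exact ⟨σ b, by rwa [Perm.inv_apply_self], by rw [Perm.inv_apply_self]⟩

lemma permDrop_inv (σ : Perm (Fin n)) : permDrop σ⁻¹ = permExc σ := by
  have := permExc_inv σ⁻¹
  rw [inv_inv] at this
  exact this.symm

lemma permFix_inv (σ : Perm (Fin n)) : permFix σ⁻¹ = permFix σ := by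
  unfold permFix
  congr 1
  ext i
  simp only [Finset.mem_filter, Finset.mem_univ, true_and]
  rw [Perm.inv_eq_iff_eq, eq_comm]

lemma permCyc_inv (σ : Perm (Fin n)) : permCyc σ⁻¹ = permCyc σ := by
  unfold permCyc
  rw [cycleType_inv, permFix_inv]

lemma cdaSet_inv (σ : Perm (Fin n)) : cdaSet σ⁻¹ = cddSet σ := by
  ext i
  rw [mem_cdaSet, mem_cddSet, inv_inv]

lemma cddSet_inv (σ : Perm (Fin n)) : cddSet σ⁻¹ = cdaSet σ := by
  ext i
  rw [mem_cddSet, mem_cdaSet, inv_inv]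

/-- hop a cycle double descent up -/
def hopUp (σ : Perm (Fin n)) (x : Fin n) : Perm (Fin n) := (hopDown σ⁻¹ x)⁻¹

section upfacts
variable {σ : Perm (Fin n)} {x : Fin n} (hd1 : σ x < x) (hd2 : x < σ⁻¹ x)
include hd1 hd2
set_option linter.unusedSectionVars false

private lemma hu1 : (σ⁻¹)⁻¹ x < x := by rwa [inv_inv]

lemma permExc_hopUp : permExc (hopUp σ x) = permExc σ + 1 := by
  rw [hopUp, permExc_inv, permDrop_hop (hu1 hd1 hd2) hd2, permDrop_inv]

lemma permDrop_hopUp : permDrop σ = permDrop (hopUp σ x) + 1 := by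
  rw [hopUp, permDrop_inv, ← permExc_inv σ]
  exact permExc_hop (hu1 hd1 hd2) hd2

lemma permFix_hopUp : permFix (hopUp σ x) = permFix σ := by
  rw [hopUp, permFix_inv, permFix_hop (hu1 hd1 hd2) hd2, permFix_inv]

lemma permCyc_hopUp : permCyc (hopUp σ x) = permCyc σ := by
  rw [hopUp, permCyc_inv, permCyc_hop (hu1 hd1 hd2) hd2, permCyc_inv]

lemma cdaSet_hopUp : cdaSet (hopUp σ x) = insert x (cdaSet σ) := by
  rw [hopUp, cdaSet_inv, cddSet_hop (hu1 hd1 hd2) hd2, cddSet_inv]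

lemma cddSet_hopUp : cddSet (hopUp σ x) = (cddSet σ).erase x := by
  rw [hopUp, cddSet_inv, cdaSet_hop (hu1 hd1 hd2) hd2, cdaSet_inv]

lemma hopDown_hopUp : hopDown (hopUp σ x) x = σ := by
  rw [hopUp, hop_invol (hu1 hd1 hd2) hd2, inv_inv]

end upfacts

lemma hopUp_hopDown {σ : Perm (Fin n)} {x : Fin n} (h1 : σ⁻¹ x < x) (h2 : x < σ x) :
    hopUp (hopDown σ x) x = σ := by
  rw [hopUp, hop_invol h1 h2, inv_inv]

end GammaAux

namespace GammaAux
open Equiv Equiv.Perm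

variable {n : ℕ}

/-- insert (hop up) all elements of `S` -/
def ins (τ : Perm (Fin n)) (S : Finset (Fin n)) : Perm (Fin n) :=
  if h : S.Nonempty then hopUp (ins τ (S.erase (S.min' h))) (S.min' h) else τ
termination_by S.card
decreasing_by exact Finset.card_erase_lt_of_mem (S.min'_mem h)

/-- hop all cycle double ascents down -/
def rep (σ : Perm (Fin n)) : Perm (Fin n) :=
  if h : (cdaSet σ).Nonempty then rep (hopDown σ ((cdaSet σ).min' h)) else σ
termination_by (cdaSet σ).card
decreasing_by
  have hx := (cdaSet σ).min'_mem h
  have hx' := hx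
  rw [mem_cdaSet] at hx'
  rw [cdaSet_hop hx'.1 hx'.2]
  exact Finset.card_erase_lt_of_mem hx

lemma min'_congr {S T : Finset (Fin n)} (hS : S.Nonempty) (hT : T.Nonempty) (h : S = T) :
    S.min' hS = T.min' hT := by subst h; rfl

lemma rep_spec (σ : Perm (Fin n)) : cdaSet (rep σ) = ∅ ∧
    cddSet (rep σ) = cddSet σ ∪ cdaSet σ ∧
    permExc σ = permExc (rep σ) + (cdaSet σ).card ∧
    permDrop (rep σ) = permDrop σ + (cdaSet σ).card ∧
    permFix (rep σ) = permFix σ ∧ permCyc (rep σ) = permCyc σ ∧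
    ins (rep σ) (cdaSet σ) = σ := by
  generalize hN : (cdaSet σ).card = N
  induction N using Nat.strong_induction_on generalizing σ with
  | _ N IH =>
  subst hN
  by_cases h : (cdaSet σ).Nonempty
  · have hx : (cdaSet σ).min' h ∈ cdaSet σ := (cdaSet σ).min'_mem h
    set x := (cdaSet σ).min' h with hxdef
    have hx' := hx
    rw [mem_cdaSet] at hx'
    obtain ⟨h1, h2⟩ := hx'
    have hca : cdaSet (hopDown σ x) = (cdaSet σ).erase x := cdaSet_hop h1 h2
    have hcard : (cdaSet (hopDown σ x)).card < (cdaSet σ).card := by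
      rw [hca]
      exact Finset.card_erase_lt_of_mem hx
    obtain ⟨I1, I2, I3, I4, I5, I6, I7⟩ := IH _ hcard (hopDown σ x) rfl
    have hrep : rep σ = rep (hopDown σ x) := by rw [rep, dif_pos h]
    have hce : (cdaSet σ).card = ((cdaSet σ).erase x).card + 1 := by
      rw [Finset.card_erase_of_mem hx]
      have : 0 < (cdaSet σ).card := Finset.card_pos.2 h
      omega
    refine ⟨by rw [hrep]; exact I1, ?_, ?_, ?_, ?_, ?_, ?_⟩
    · rw [hrep, I2, hca, cddSet_hop h1 h2]
      ext a
      simp only [Finset.mem_union, Finset.mem_insert, Finset.mem_erase]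
      by_cases hax : a = x
      · subst hax; simp [hx]
      · simp [hax]
    · rw [hrep, permExc_hop h1 h2, I3, hca, hce]
      omega
    · rw [hrep, I4, permDrop_hop h1 h2, hca, hce]
      omega
    · rw [hrep, I5, permFix_hop h1 h2]
    · rw [hrep, I6, permCyc_hop h1 h2]
    · rw [ins, dif_pos h, hrep, ← hxdef, ← hca, I7]
      exact hopUp_hopDown h1 h2
  · have he : cdaSet σ = ∅ := Finset.not_nonempty_iff_eq_empty.1 h
    have hr : rep σ = σ := by rw [rep, dif_neg h]
    have hi : ins σ (∅ : Finset (Fin n)) = σ := by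
      rw [ins, dif_neg Finset.not_nonempty_empty]
    simp [hr, he, hi]

lemma ins_spec (S : Finset (Fin n)) (τ : Perm (Fin n)) (hτ : cdaSet τ = ∅)
    (hS : S ⊆ cddSet τ) :
    cdaSet (ins τ S) = S ∧ cddSet (ins τ S) = cddSet τ \ S ∧
    permExc (ins τ S) = permExc τ + S.card ∧
    permDrop τ = permDrop (ins τ S) + S.card ∧
    permFix (ins τ S) = permFix τ ∧ permCyc (ins τ S) = permCyc τ ∧
    rep (ins τ S) = τ := by
  generalize hN : S.card = N
  induction N using Nat.strong_induction_on generalizing S with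
  | _ N IH =>
  subst hN
  by_cases h : S.Nonempty
  · have hxS : S.min' h ∈ S := S.min'_mem h
    set x := S.min' h with hxdef
    have hS' : S.erase x ⊆ cddSet τ := (Finset.erase_subset x S).trans hS
    have hcard : (S.erase x).card < S.card := Finset.card_erase_lt_of_mem hxS
    obtain ⟨I1, I2, I3, I4, I5, I6, I7⟩ := IH _ hcard (S.erase x) hS' rfl
    have hxc : x ∈ cddSet (ins τ (S.erase x)) := by
      rw [I2, Finset.mem_sdiff]
      exact ⟨hS hxS, Finset.notMem_erase x S⟩
    rw [mem_cddSet] at hxc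
    obtain ⟨hd1, hd2⟩ := hxc
    have hins : ins τ S = hopUp (ins τ (S.erase x)) x := by rw [ins, dif_pos h]
    have hce : S.card = (S.erase x).card + 1 := by
      rw [Finset.card_erase_of_mem hxS]
      have : 0 < S.card := Finset.card_pos.2 h
      omega
    have hcda : cdaSet (ins τ S) = S := by
      rw [hins, cdaSet_hopUp hd1 hd2, I1, Finset.insert_erase hxS]
    refine ⟨hcda, ?_, ?_, ?_, ?_, ?_, ?_⟩
    · rw [hins, cddSet_hopUp hd1 hd2, I2]
      conv_rhs => rw [← Finset.insert_erase hxS]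
      rw [Finset.sdiff_insert]
    · rw [hins, permExc_hopUp hd1 hd2, I3]
      omega
    · have hD := permDrop_hopUp hd1 hd2
      rw [hins]
      omega
    · rw [hins, permFix_hopUp hd1 hd2, I5]
    · rw [hins, permCyc_hopUp hd1 hd2, I6]
    · have hne : (cdaSet (ins τ S)).Nonempty := by rw [hcda]; exact h
      rw [rep, dif_pos hne]
      have hmin : (cdaSet (ins τ S)).min' hne = x := by
        rw [min'_congr hne (hcda ▸ h) hcda]
      rw [hmin, hins, hopDown_hopUp hd1 hd2, I7]
  · have he : S = ∅ := Finset.not_nonempty_iff_eq_empty.1 h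
    subst he
    have hi : ins τ (∅ : Finset (Fin n)) = τ := by
      rw [ins, dif_neg Finset.not_nonempty_empty]
    have hr : rep τ = τ := by
      rw [rep, dif_neg (by rw [hτ]; exact Finset.not_nonempty_empty)]
    simp [hi, hτ, hr]

end GammaAux

namespace GammaAux
open Equiv Equiv.Perm

variable {n : ℕ}

lemma split_card (p q : Fin n → Prop) [DecidablePred p] [DecidablePred q] :
    #(Finset.univ.filter p) =
      #(Finset.univ.filter fun i => p i ∧ q i) + #(Finset.univ.filter fun i => p i ∧ ¬ q i) := by
  have := Finset.card_filter_add_card_filter_not (s := Finset.univ.filter p) (p := q)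
  rw [Finset.filter_filter, Finset.filter_filter] at this
  omega

lemma exc_eq_inv_count (σ : Perm (Fin n)) :
    permExc σ = #(Finset.univ.filter fun i => σ⁻¹ i < i) := by
  unfold permExc
  refine Finset.card_bij (fun a _ => σ a) ?_ ?_ ?_
  · intro a ha
    simp only [Finset.mem_filter, Finset.mem_univ, true_and] at ha ⊢
    rwa [Perm.inv_apply_self]
  · intro a _ b _ h
    exact σ.injective h
  · intro b hb
    simp only [Finset.mem_filter, Finset.mem_univ, true_and] at hb ⊢
    exact ⟨σ⁻¹ b, by rwa [Perm.apply_inv_self], by rw [Perm.apply_inv_self]⟩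

lemma fix_iff_inv_fix (σ : Perm (Fin n)) (i : Fin n) : σ⁻¹ i = i ↔ σ i = i := by
  rw [Perm.inv_eq_iff_eq, eq_comm]

lemma exc_split_v (σ : Perm (Fin n)) :
    permExc σ = #(cdaSet σ) + #(Finset.univ.filter fun i => i < σ i ∧ i < σ⁻¹ i) := by
  rw [permExc, split_card (fun i => i < σ i) (fun i => σ⁻¹ i < i)]
  congr 1
  · congr 1
    ext i
    rw [mem_cdaSet, Finset.mem_filter]
    simp only [Finset.mem_univ, true_and]
    tauto
  · congr 1
    ext i
    rw [Finset.mem_filter, Finset.mem_filter]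
    simp only [Finset.mem_univ, true_and, not_lt]
    constructor
    · rintro ⟨ha, hb⟩
      refine ⟨ha, lt_of_le_of_ne hb fun he => ?_⟩
      exact absurd ((fix_iff_inv_fix σ i).1 he.symm) (ne_of_gt ha)
    · rintro ⟨ha, hb⟩
      exact ⟨ha, hb.le⟩

lemma inv_exc_split (σ : Perm (Fin n)) :
    permExc σ = #(cdaSet σ) + #(Finset.univ.filter fun i => σ i < i ∧ σ⁻¹ i < i) := by
  rw [exc_eq_inv_count, split_card (fun i => σ⁻¹ i < i) (fun i => i < σ i)]
  congr 1
  congr 1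
  ext i
  rw [Finset.mem_filter, Finset.mem_filter]
  simp only [Finset.mem_univ, true_and, not_lt]
  constructor
  · rintro ⟨ha, hb⟩
    refine ⟨lt_of_le_of_ne hb fun he => ?_, ha⟩
    exact absurd ((fix_iff_inv_fix σ i).2 he) (ne_of_lt ha)
  · rintro ⟨ha, hb⟩
    exact ⟨hb, ha.le⟩

lemma drop_split (σ : Perm (Fin n)) :
    permDrop σ = #(cddSet σ) + #(Finset.univ.filter fun i => σ i < i ∧ σ⁻¹ i < i) := by
  rw [permDrop, split_card (fun i => σ i < i) (fun i => σ⁻¹ i < i), Nat.add_comm]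
  congr 1
  · congr 1
    ext i
    rw [mem_cddSet, Finset.mem_filter]
    simp only [Finset.mem_univ, true_and, not_lt]
    constructor
    · rintro ⟨ha, hb⟩
      refine ⟨ha, lt_of_le_of_ne hb fun he => ?_⟩
      exact absurd ((fix_iff_inv_fix σ i).1 he.symm) (ne_of_lt ha)
    · rintro ⟨ha, hb⟩
      exact ⟨ha, hb.le⟩

lemma total_count (σ : Perm (Fin n)) : permFix σ + (permExc σ + permDrop σ) = n := by
  have h1 := Finset.card_filter_add_card_filter_not
    (s := (Finset.univ : Finset (Fin n))) (p := fun i => σ i = i)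
  have h2 : #(Finset.univ.filter fun i : Fin n => ¬ σ i = i) = permExc σ + permDrop σ := by
    rw [split_card (fun i => ¬ σ i = i) (fun i => i < σ i)]
    congr 1
    · rw [permExc]
      congr 1
      ext i
      simp only [Finset.mem_filter, Finset.mem_univ, true_and]
      exact ⟨fun h => h.2, fun h => ⟨(ne_of_gt h), h⟩⟩
    · rw [permDrop]
      congr 1
      ext i
      simp only [Finset.mem_filter, Finset.mem_univ, true_and, not_lt]
      constructor
      · rintro ⟨ha, hb⟩
        exact lt_of_le_of_ne hb ha
      · intro h
        exact ⟨ne_of_lt h, h.le⟩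
  rw [h2] at h1
  unfold permFix
  rw [Finset.card_univ, Fintype.card_fin] at h1
  exact h1

lemma cdafree_drop {τ : Perm (Fin n)} (hτ : cdaSet τ = ∅) :
    permDrop τ = permExc τ + #(cddSet τ) := by
  have h2 := exc_split_v τ
  have h3 := inv_exc_split τ
  have h4 := drop_split τ
  rw [hτ] at h2 h3
  simp only [Finset.card_empty, Nat.zero_add] at h2 h3
  omega

lemma cdafree_counts {τ : Perm (Fin n)} (hτ : cdaSet τ = ∅) :
    2 * permExc τ ≤ n ∧ #(cddSet τ) + permFix τ = n - 2 * permExc τ := by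
  have h1 := total_count τ
  have h2 := exc_split_v τ
  have h3 := inv_exc_split τ
  have h4 := drop_split τ
  rw [hτ] at h2 h3
  simp only [Finset.card_empty, Nat.zero_add] at h2 h3
  omega

end GammaAux


open GammaAux

/-- Gamma-expansion of the (α,t)-binomial-Eulerian polynomial:
Ã_n(x,y,t|α) = Σ_j γ̃_{n,j}(α,t)(xy)^j(x+y)^{n−2j} with
γ̃_{n,j}(α,t) = Σ_{σ ∈ S_n, cda σ = 0, exc σ = j} α^{cyc σ} t^{fix σ}. -/
theorem gamma_expansion_binomial_eulerian (n : ℕ) (hn : 1 ≤ n)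
    (R : Type*) [CommRing R] (x y t α : R) :
    ∑ σ : Equiv.Perm (Fin n),
        x ^ permExc σ * y ^ permDrop σ * ((x + y) * t) ^ permFix σ * α ^ permCyc σ =
      ∑ j ∈ Finset.range (n / 2 + 1),
        (∑ σ ∈ Finset.univ.filter
            (fun σ : Equiv.Perm (Fin n) => permCda σ = 0 ∧ permExc σ = j),
          α ^ permCyc σ * t ^ permFix σ) * (x * y) ^ j * (x + y) ^ (n - 2 * j) := by
  classical
  set F : Equiv.Perm (Fin n) → R :=
    fun σ => x ^ permExc σ * y ^ permDrop σ * ((x + y) * t) ^ permFix σ * α ^ permCyc σ with hF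
  set G : Equiv.Perm (Fin n) → R :=
    fun τ => α ^ permCyc τ * t ^ permFix τ * (x * y) ^ permExc τ *
      (x + y) ^ (n - 2 * permExc τ) with hG
  set D : Finset (Equiv.Perm (Fin n)) :=
    Finset.univ.filter (fun τ : Equiv.Perm (Fin n) => cdaSet τ = ∅) with hD
  -- Left side equals sum over (cda-free τ, subset of cddSet τ)
  have hbij : ∑ σ : Equiv.Perm (Fin n), F σ =
      ∑ p ∈ D.sigma (fun τ => (cddSet τ).powerset), F (ins p.1 p.2) := by
    refine Finset.sum_nbij' (fun σ => ⟨rep σ, cdaSet σ⟩) (fun p => ins p.1 p.2) ?_ ?_ ?_ ?_ ?_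
    · intro σ _
      obtain ⟨h1, h2, -⟩ := rep_spec σ
      rw [Finset.mem_sigma, hD, Finset.mem_filter, Finset.mem_powerset, h2]
      exact ⟨⟨Finset.mem_univ _, h1⟩, Finset.subset_union_right⟩
    · intro p _
      exact Finset.mem_univ _
    · intro σ _
      obtain ⟨-, -, -, -, -, -, h7⟩ := rep_spec σ
      exact h7
    · intro p hp
      obtain ⟨τ, S⟩ := p
      rw [Finset.mem_sigma, hD, Finset.mem_filter, Finset.mem_powerset] at hp
      obtain ⟨⟨-, hτ⟩, hS⟩ := hp
      obtain ⟨I1, -, -, -, -, -, I7⟩ := ins_spec S τ hτ hS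
      exact Sigma.ext I7 (heq_of_eq I1)
    · intro σ _
      obtain ⟨-, -, -, -, -, -, h7⟩ := rep_spec σ
      rw [h7]
  -- binomial identity over powersets
  have hbinom : ∀ M : Finset (Fin n),
      ∑ S ∈ M.powerset, x ^ S.card * y ^ (M \ S).card = (x + y) ^ M.card := by
    intro M
    have h := Finset.prod_add (fun _ : Fin n => x) (fun _ : Fin n => y) M
    simp only [Finset.prod_const] at h
    exact h.symm
  -- inner sum evaluation
  have hinner : ∀ τ ∈ D, ∑ S ∈ (cddSet τ).powerset, F (ins τ S) = G τ := by
    intro τ hτmem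
    rw [hD, Finset.mem_filter] at hτmem
    have hτ : cdaSet τ = ∅ := hτmem.2
    have hstep : ∀ S ∈ (cddSet τ).powerset, F (ins τ S) =
        x ^ S.card * y ^ ((cddSet τ) \ S).card *
          (x ^ permExc τ * y ^ permExc τ * ((x + y) * t) ^ permFix τ * α ^ permCyc τ) := by
      intro S hS
      rw [Finset.mem_powerset] at hS
      obtain ⟨-, -, I3, I4, I5, I6, -⟩ := ins_spec S τ hτ hS
      have hdrop : permDrop (ins τ S) = permExc τ + ((cddSet τ) \ S).card := by
        have hsd : ((cddSet τ) \ S).card = (cddSet τ).card - S.card := Finset.card_sdiff_of_subset hS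
        have hdτ := cdafree_drop hτ
        have hle := Finset.card_le_card hS
        omega
      rw [hF]
      simp only []
      rw [I3, hdrop, I5, I6]
      rw [pow_add, pow_add]
      ring
    rw [Finset.sum_congr rfl hstep, ← Finset.sum_mul, hbinom]
    have hc := (cdafree_counts hτ).2
    rw [hG]
    simp only []
    rw [← hc, pow_add, mul_pow, mul_pow]
    ring
  -- RHS transformation
  have hRHS : ∀ j, (∑ σ ∈ Finset.univ.filter
        (fun σ : Equiv.Perm (Fin n) => permCda σ = 0 ∧ permExc σ = j),
        α ^ permCyc σ * t ^ permFix σ) * (x * y) ^ j * (x + y) ^ (n - 2 * j) =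
      ∑ σ ∈ D.filter (fun σ => permExc σ = j), G σ := by
    intro j
    rw [Finset.sum_mul, Finset.sum_mul]
    have hset : Finset.univ.filter
        (fun σ : Equiv.Perm (Fin n) => permCda σ = 0 ∧ permExc σ = j) =
        D.filter (fun σ => permExc σ = j) := by
      rw [hD, Finset.filter_filter]
      congr 1
      ext σ
      rw [permCda, Finset.card_eq_zero]
      rfl
    rw [hset]
    refine Finset.sum_congr rfl ?_
    intro σ hσ
    rw [Finset.mem_filter] at hσ
    rw [hG]
    simp only []
    rw [hσ.2]
  rw [hbij, Finset.sum_sigma, Finset.sum_congr rfl hinner,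
    Finset.sum_congr rfl (fun j _ => hRHS j)]
  refine (Finset.sum_fiberwise_of_maps_to ?_ G).symm
  intro σ hσ
  rw [hD, Finset.mem_filter] at hσ
  have h2e := (cdafree_counts hσ.2).1
  rw [Finset.mem_range]
  have : permExc σ ≤ n / 2 := Nat.le_div_iff_mul_le (by norm_num) |>.2 (by omega)
  omega
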